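/- Let (X, ∂, ξ) be a precrossed B-module of groups and let H, K be normal subgroups of X, each invariant under the B-action, with H ≤ ker ∂ and K ≤ ker ∂. Then ⟨H ⊓ K, H ⊔ K⟩ ⊔ ⟨H, K⟩ = ⁅H, K⁆, the commutator subgroup of H and K. -/

import Mathlib

variable {B X Y Z : Type*} [Group B] [Group X] [Group Y] [Group Z]

/-- `(X, δ, ξ)` is a precrossed `B`-module of groups:
`δ : X →* B` satisfies `δ (ξ b x) = b * δ x * b⁻¹`. -/
def IsPrecrossedMod (δ : X →* B) (ξ : B →* MulAut X) : Prop :=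
  ∀ (b : B) (x : X), δ (ξ b x) = b * δ x * b⁻¹

/-- A subgroup invariant under the `B`-action, i.e. a precrossed submodule. -/
def IsBInvariant (ξ : B →* MulAut X) (M : Subgroup X) : Prop :=
  ∀ (b : B), ∀ m ∈ M, ξ b m ∈ M

/-- The Peiffer commutator `⟨M, N⟩` of two precrossed submodules: the subgroup
generated by the Peiffer elements `m * n * m⁻¹ * (ξ (δ m) n)⁻¹` and
`n * m * n⁻¹ * (ξ (δ n) m)⁻¹` for `m ∈ M`, `n ∈ N`. -/
def peifferCommutator (δ : X →* B) (ξ : B →* MulAut X) (M N : Subgroup X) : Subgroup X :=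
  Subgroup.closure
    ({y | ∃ m ∈ M, ∃ n ∈ N, y = m * n * m⁻¹ * (ξ (δ m) n)⁻¹} ∪
     {y | ∃ m ∈ M, ∃ n ∈ N, y = n * m * n⁻¹ * (ξ (δ n) m)⁻¹})

/-- `f` is a morphism of precrossed `B`-modules. -/
def IsPXModHom (δ : X →* B) (ξ : B →* MulAut X) (δ' : Y →* B) (ξ' : B →* MulAut Y)
    (f : X →* Y) : Prop :=
  (∀ x : X, δ' (f x) = δ x) ∧ ∀ (b : B) (x : X), f (ξ b x) = ξ' b (f x)

lemma peiffer_eq_commutator_of_le_ker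
    (δ : X →* B) (ξ : B →* MulAut X) (M N : Subgroup X)
    (hM : M ≤ δ.ker) (hN : N ≤ δ.ker) :
    peifferCommutator δ ξ M N = ⁅M, N⁆ := by
  have key : ∀ m ∈ M, ∀ n ∈ N, ξ (δ m) n = n := by
    intro m hm n hn
    rw [MonoidHom.mem_ker.mp (hM hm), map_one]; rfl
  have key' : ∀ n ∈ N, ∀ m ∈ M, ξ (δ n) m = m := by
    intro n hn m hm
    rw [MonoidHom.mem_ker.mp (hN hn), map_one]; rfl
  apply le_antisymm
  · rw [peifferCommutator]
    apply Subgroup.closure_le _ |>.mpr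
    rintro y (⟨m, hm, n, hn, rfl⟩ | ⟨m, hm, n, hn, rfl⟩)
    · rw [key m hm n hn]
      exact Subgroup.commutator_mem_commutator hm hn
    · rw [key' n hn m hm]
      rw [Subgroup.commutator_comm]
      exact Subgroup.commutator_mem_commutator hn hm
  · rw [Subgroup.commutator_le]
    intro m hm n hn
    apply Subgroup.subset_closure
    left
    exact ⟨m, hm, n, hn, by rw [key m hm n hn]; rfl⟩

open scoped Pointwise

/-- for normal `B`-invariant subgroups `H, K ≤ ker δ`,
`⟨H ⊓ K, H ⊔ K⟩ ⊔ ⟨H, K⟩ = ⁅H, K⁆`. -/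
theorem peiffer_join_eq_commutator
    (δ : X →* B) (ξ : B →* MulAut X) (hpre : IsPrecrossedMod δ ξ)
    (H K : Subgroup X) (hHn : H.Normal) (hKn : K.Normal)
    (hHinv : IsBInvariant ξ H) (hKinv : IsBInvariant ξ K)
    (hHker : H ≤ δ.ker) (hKker : K ≤ δ.ker) :
    peifferCommutator δ ξ (H ⊓ K) (H ⊔ K) ⊔ peifferCommutator δ ξ H K = ⁅H, K⁆ := by
  have hsup : H ⊔ K ≤ δ.ker := sup_le hHker hKker
  have hinf : H ⊓ K ≤ δ.ker := inf_le_left.trans hHker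
  rw [peiffer_eq_commutator_of_le_ker δ ξ _ _ hinf hsup,
    peiffer_eq_commutator_of_le_ker δ ξ _ _ hHker hKker]
  refine sup_eq_right.mpr ?_
  rw [Subgroup.commutator_le]
  intro m hm n hn
  have : n ∈ ((H : Set X) * (K : Set X)) := by
    rw [← Subgroup.mul_normal H K]; exact hn
  obtain ⟨h, hh, k, hk, rfl⟩ := this
  open scoped commutatorElement in
  have e : ⁅m, h * k⁆ = ⁅m, h⁆ * (h * ⁅m, k⁆ * h⁻¹) := by group
  rw [e]
  refine mul_mem ?_ (Subgroup.commutator_normal H K |>.conj_mem _ ?_ h)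
  · rw [Subgroup.commutator_comm]
    exact Subgroup.commutator_mem_commutator hm.2 hh
  · exact Subgroup.commutator_mem_commutator hm.1 hk
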